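/- As formal power series, G_3(w) := (1/8)∑_{ε∈{±1}^3} ε_1ε_2ε_3 (1−(2/3)(ε_1+ε_2+ε_3)w+w^2)^{−1/2} equals w/(4(1−w^2)) − 3/(8√(1−(2/3)w+w^2)) + 3/(8√(1+(2/3)w+w^2)), and its coefficient of w^3 is 5/9. -/

import Mathlib

open PowerSeries

private lemma sq_unique {s t : PowerSeries ℚ} (h : s ^ 2 = t ^ 2)
    (hs : constantCoeff s = 1) (ht : constantCoeff t = 1) : s = t := by
  have h0 : (s - t) * (s + t) = 0 := by linear_combination h
  rcases mul_eq_zero.mp h0 with h1 | h1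
  · exact sub_eq_zero.mp h1
  · exfalso
    have := congrArg (constantCoeff) h1
    simp [hs, ht] at this

private lemma key {s t : PowerSeries ℚ} (hs0 : constantCoeff s = 1)
    (ht0 : constantCoeff t = 1) (h : s ^ 2 * t ^ 2 = 1) : s = t⁻¹ := by
  rw [PowerSeries.eq_inv_iff_mul_eq_one (by rw [ht0]; norm_num)]
  refine sq_unique ?_ ?_ (by simp)
  · rw [mul_pow, h, one_pow]
  · simp [hs0, ht0]

private lemma cm (n : ℕ) (f g : PowerSeries ℚ) :
    coeff n (f * g) = ∑ k ∈ Finset.range (n + 1), coeff k f * coeff (n - k) g := by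
  rw [coeff_mul, Finset.Nat.sum_antidiagonal_eq_sum_range_succ_mk]

set_option maxHeartbeats 1000000 in
/-- `G₃(w) = (1/8) ∑_{ε∈{±1}³} ε₁ε₂ε₃ (1-(2/3)(ε₁+ε₂+ε₃)w+w²)^{-1/2}
    = w/(4(1-w²)) - 3/(8√(1-(2/3)w+w²)) + 3/(8√(1+(2/3)w+w²))`,
and its coefficient of `w³` is `5/9`. -/
theorem G3_formula
    (S : (Fin 3 → ℤˣ) → PowerSeries ℚ)
    (hS : ∀ ε : Fin 3 → ℤˣ,
      constantCoeff (S ε) = 1 ∧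
        (S ε) ^ 2 * (1 - C ((2 / 3) * ∑ i, ((ε i : ℤ) : ℚ)) * X + X ^ 2) = 1)
    (A B : PowerSeries ℚ)
    (hA1 : constantCoeff A = 1) (hA : A ^ 2 = 1 - C (2 / 3) * X + X ^ 2)
    (hB1 : constantCoeff B = 1) (hB : B ^ 2 = 1 + C (2 / 3) * X + X ^ 2) :
    C (1 / 8) * (∑ ε : Fin 3 → ℤˣ, C (∏ i, ((ε i : ℤ) : ℚ)) * S ε) =
        C (1 / 4) * X * (1 - X ^ 2)⁻¹ - C (3 / 8) * A⁻¹ + C (3 / 8) * B⁻¹ ∧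
      coeff 3 (C (1 / 8) * ∑ ε : Fin 3 → ℤˣ, C (∏ i, ((ε i : ℤ) : ℚ)) * S ε) =
        5 / 9 := by
  -- identify each `S ε`
  have hid : ∀ ε : Fin 3 → ℤˣ, ∀ t : PowerSeries ℚ, constantCoeff t = 1 →
      t ^ 2 = 1 - C ((2 / 3) * ∑ i, ((ε i : ℤ) : ℚ)) * X + X ^ 2 → S ε = t⁻¹ := by
    intro ε t ht0 ht
    exact key (hS ε).1 ht0 (by rw [ht]; exact (hS ε).2)
  have hXm1 : constantCoeff (1 - X : PowerSeries ℚ) = 1 := by simp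
  have hXp1 : constantCoeff (1 + X : PowerSeries ℚ) = 1 := by simp
  have hC2 : (C 2 : PowerSeries ℚ) = 2 := by exact map_ofNat (C (R := ℚ)) 2
  have e1 : S ![1, 1, 1] = (1 - X : PowerSeries ℚ)⁻¹ := by
    refine hid _ _ hXm1 ?_
    have : (∑ i, (((![1, 1, 1] : Fin 3 → ℤˣ) i : ℤ) : ℚ)) = 3 := by
      norm_num [Fin.sum_univ_three, Matrix.cons_val_two, Matrix.vecHead, Matrix.vecTail]
    rw [this, show (2 / 3 : ℚ) * 3 = 2 by norm_num, hC2]; ring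
  have e8 : S ![-1, -1, -1] = (1 + X : PowerSeries ℚ)⁻¹ := by
    refine hid _ _ hXp1 ?_
    have : (∑ i, (((![-1, -1, -1] : Fin 3 → ℤˣ) i : ℤ) : ℚ)) = -3 := by
      norm_num [Fin.sum_univ_three, Matrix.cons_val_two, Matrix.vecHead, Matrix.vecTail]
    rw [this, show (2 / 3 : ℚ) * (-3) = -2 by norm_num]
    rw [show (C (-2) : PowerSeries ℚ) = -2 by rw [map_neg, hC2]]; ring
  have eA : ∀ ε : Fin 3 → ℤˣ, (∑ i, ((ε i : ℤ) : ℚ)) = 1 → S ε = A⁻¹ := by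
    intro ε hε
    refine hid _ _ hA1 ?_
    rw [hε, mul_one, hA]
  have eB : ∀ ε : Fin 3 → ℤˣ, (∑ i, ((ε i : ℤ) : ℚ)) = -1 → S ε = B⁻¹ := by
    intro ε hε
    refine hid _ _ hB1 ?_
    rw [hε, show (2 / 3 : ℚ) * (-1) = -(2/3) by norm_num, map_neg, hB]; ring
  have e2 : S ![1, 1, -1] = A⁻¹ := eA _ (by norm_num [Fin.sum_univ_three, Matrix.cons_val_two, Matrix.vecHead, Matrix.vecTail])
  have e3 : S ![1, -1, 1] = A⁻¹ := eA _ (by norm_num [Fin.sum_univ_three, Matrix.cons_val_two, Matrix.vecHead, Matrix.vecTail])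
  have e5 : S ![-1, 1, 1] = A⁻¹ := eA _ (by norm_num [Fin.sum_univ_three, Matrix.cons_val_two, Matrix.vecHead, Matrix.vecTail])
  have e4 : S ![1, -1, -1] = B⁻¹ := eB _ (by norm_num [Fin.sum_univ_three, Matrix.cons_val_two, Matrix.vecHead, Matrix.vecTail])
  have e6 : S ![-1, 1, -1] = B⁻¹ := eB _ (by norm_num [Fin.sum_univ_three, Matrix.cons_val_two, Matrix.vecHead, Matrix.vecTail])
  have e7 : S ![-1, -1, 1] = B⁻¹ := eB _ (by norm_num [Fin.sum_univ_three, Matrix.cons_val_two, Matrix.vecHead, Matrix.vecTail])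
  -- evaluate the sum
  have hsum : (∑ ε : Fin 3 → ℤˣ, C (∏ i, ((ε i : ℤ) : ℚ)) * S ε) =
      (1 - X : PowerSeries ℚ)⁻¹ - (1 + X : PowerSeries ℚ)⁻¹ - 3 * A⁻¹ + 3 * B⁻¹ := by
    rw [show (Finset.univ : Finset (Fin 3 → ℤˣ)) =
      {![1,1,1], ![1,1,-1], ![1,-1,1], ![1,-1,-1], ![-1,1,1], ![-1,1,-1], ![-1,-1,1],
        ![-1,-1,-1]} by decide,
      Finset.sum_insert (by decide), Finset.sum_insert (by decide),
      Finset.sum_insert (by decide), Finset.sum_insert (by decide),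
      Finset.sum_insert (by decide), Finset.sum_insert (by decide),
      Finset.sum_pair (by decide)]
    rw [e1, e2, e3, e4, e5, e6, e7, e8]
    rw [show (∏ i, (((![1,1,1] : Fin 3 → ℤˣ) i : ℤ) : ℚ)) = 1 by simp [Fin.prod_univ_three],
      show (∏ i, (((![1,1,-1] : Fin 3 → ℤˣ) i : ℤ) : ℚ)) = -1 by simp [Fin.prod_univ_three],
      show (∏ i, (((![1,-1,1] : Fin 3 → ℤˣ) i : ℤ) : ℚ)) = -1 by simp [Fin.prod_univ_three],
      show (∏ i, (((![1,-1,-1] : Fin 3 → ℤˣ) i : ℤ) : ℚ)) = 1 by simp [Fin.prod_univ_three],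
      show (∏ i, (((![-1,1,1] : Fin 3 → ℤˣ) i : ℤ) : ℚ)) = -1 by simp [Fin.prod_univ_three],
      show (∏ i, (((![-1,1,-1] : Fin 3 → ℤˣ) i : ℤ) : ℚ)) = 1 by simp [Fin.prod_univ_three],
      show (∏ i, (((![-1,-1,1] : Fin 3 → ℤˣ) i : ℤ) : ℚ)) = 1 by simp [Fin.prod_univ_three],
      show (∏ i, (((![-1,-1,-1] : Fin 3 → ℤˣ) i : ℤ) : ℚ)) = -1 by simp [Fin.prod_univ_three]]
    simp only [map_one, map_neg]
    ring
  -- partial fractions for the pole terms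
  have hne : (1 - X ^ 2 : PowerSeries ℚ) ≠ 0 := by
    intro h
    have := congrArg (constantCoeff) h
    simp at this
  have hm1 : (1 - X : PowerSeries ℚ) * (1 - X)⁻¹ = 1 :=
    PowerSeries.mul_inv_cancel _ (by rw [hXm1]; norm_num)
  have hp1 : (1 + X : PowerSeries ℚ) * (1 + X)⁻¹ = 1 :=
    PowerSeries.mul_inv_cancel _ (by rw [hXp1]; norm_num)
  have hs1 : (1 - X ^ 2 : PowerSeries ℚ) * (1 - X ^ 2)⁻¹ = 1 :=
    PowerSeries.mul_inv_cancel _ (by simp)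
  have h2X : (1 - X : PowerSeries ℚ)⁻¹ - (1 + X : PowerSeries ℚ)⁻¹ =
      2 * X * (1 - X ^ 2 : PowerSeries ℚ)⁻¹ := by
    apply mul_right_cancel₀ hne
    linear_combination (1 + X) * hm1 - (1 - X) * hp1 - 2 * X * hs1
  have hC14 : (C (1 / 4) : PowerSeries ℚ) = 2 * C (1 / 8) := by
    rw [show (1 / 4 : ℚ) = 2 * (1 / 8) by norm_num, map_mul, hC2]
  have hC38 : (C (3 / 8) : PowerSeries ℚ) = 3 * C (1 / 8) := by
    rw [show (3 / 8 : ℚ) = 3 * (1 / 8) by norm_num, map_mul, map_ofNat]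
  have hmain : C (1 / 8) * (∑ ε : Fin 3 → ℤˣ, C (∏ i, ((ε i : ℤ) : ℚ)) * S ε) =
      C (1 / 4) * X * (1 - X ^ 2)⁻¹ - C (3 / 8) * A⁻¹ + C (3 / 8) * B⁻¹ := by
    rw [hsum, hC14, hC38]
    linear_combination (C (1 / 8) : PowerSeries ℚ) * h2X
  refine ⟨hmain, ?_⟩
  rw [hmain]
  -- coefficients of A and A⁻¹
  have hAinv : A * A⁻¹ = 1 := PowerSeries.mul_inv_cancel _ (by rw [hA1]; norm_num)
  have hBinv : B * B⁻¹ = 1 := PowerSeries.mul_inv_cancel _ (by rw [hB1]; norm_num)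
  have hA0 : coeff 0 A = 1 := by rwa [coeff_zero_eq_constantCoeff]
  have hB0 : coeff 0 B = 1 := by rwa [coeff_zero_eq_constantCoeff]
  have cA : ∀ n, coeff n (A ^ 2) = coeff n (1 - C (2 / 3) * X + X ^ 2) :=
    fun n => congrArg (coeff n) hA
  have cB : ∀ n, coeff n (B ^ 2) = coeff n (1 + C (2 / 3) * X + X ^ 2) :=
    fun n => congrArg (coeff n) hB
  have hA1' : coeff 1 A = -(1/3) := by
    have := cA 1
    rw [sq, cm] at this
    simp [Finset.sum_range_succ, hA0, coeff_one, coeff_X_pow] at this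
    linarith
  have hA2' : coeff 2 A = 4/9 := by
    have := cA 2
    rw [sq, cm] at this
    simp [Finset.sum_range_succ, hA0, hA1', coeff_one, coeff_X_pow] at this
    linarith
  have hB1' : coeff 1 B = 1/3 := by
    have := cB 1
    rw [sq, cm] at this
    simp [Finset.sum_range_succ, hB0, coeff_one, coeff_X_pow] at this
    linarith
  have hB2' : coeff 2 B = 4/9 := by
    have := cB 2
    rw [sq, cm] at this
    simp [Finset.sum_range_succ, hB0, hB1', coeff_one, coeff_X_pow] at this
    linarith
  have hA3' : coeff 3 A = 4/27 := by
    have := cA 3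
    rw [sq, cm] at this
    simp [Finset.sum_range_succ, hA0, hA1', hA2', coeff_one, coeff_X_pow] at this
    linarith
  have hB3' : coeff 3 B = -(4/27) := by
    have := cB 3
    rw [sq, cm] at this
    simp [Finset.sum_range_succ, hB0, hB1', hB2', coeff_one, coeff_X_pow] at this
    linarith
  -- coefficients of inverses
  have iA0 : coeff 0 A⁻¹ = 1 := by
    rw [coeff_zero_eq_constantCoeff, PowerSeries.constantCoeff_inv, hA1]; norm_num
  have iB0 : coeff 0 B⁻¹ = 1 := by
    rw [coeff_zero_eq_constantCoeff, PowerSeries.constantCoeff_inv, hB1]; norm_num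
  have iA1 : coeff 1 A⁻¹ = 1/3 := by
    have := congrArg (coeff 1) hAinv
    rw [cm] at this
    simp [Finset.sum_range_succ, hA0, hA1', iA0, coeff_one] at this
    linarith
  have iA2 : coeff 2 A⁻¹ = -(1/3) := by
    have := congrArg (coeff 2) hAinv
    rw [cm] at this
    simp [Finset.sum_range_succ, hA0, hA1', hA2', iA0, iA1, coeff_one] at this
    linarith
  have iA3 : coeff 3 A⁻¹ = -(11/27) := by
    have := congrArg (coeff 3) hAinv
    rw [cm] at this
    simp [Finset.sum_range_succ, hA0, hA1', hA2', hA3', iA0, iA1, iA2, coeff_one] at this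
    linarith
  have iB1 : coeff 1 B⁻¹ = -(1/3) := by
    have := congrArg (coeff 1) hBinv
    rw [cm] at this
    simp [Finset.sum_range_succ, hB0, hB1', iB0, coeff_one] at this
    linarith
  have iB2 : coeff 2 B⁻¹ = -(1/3) := by
    have := congrArg (coeff 2) hBinv
    rw [cm] at this
    simp [Finset.sum_range_succ, hB0, hB1', hB2', iB0, iB1, coeff_one] at this
    linarith
  have iB3 : coeff 3 B⁻¹ = 11/27 := by
    have := congrArg (coeff 3) hBinv
    rw [cm] at this
    simp [Finset.sum_range_succ, hB0, hB1', hB2', hB3', iB0, iB1, iB2, coeff_one] at this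
    linarith
  -- coefficient of (1 - X²)⁻¹
  have hI0 : coeff 0 (1 - X ^ 2 : PowerSeries ℚ)⁻¹ = 1 := by
    rw [coeff_zero_eq_constantCoeff, PowerSeries.constantCoeff_inv]; simp
  have hI1 : coeff 1 (1 - X ^ 2 : PowerSeries ℚ)⁻¹ = 0 := by
    have := congrArg (coeff 1) hs1
    rw [cm] at this
    simp [Finset.sum_range_succ, coeff_one, coeff_X_pow, hI0] at this
    linarith
  have hI2 : coeff 2 (1 - X ^ 2 : PowerSeries ℚ)⁻¹ = 1 := by
    have := congrArg (coeff 2) hs1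
    rw [cm] at this
    simp [Finset.sum_range_succ, coeff_one, coeff_X_pow, hI0, hI1] at this
    linarith
  have hXI : coeff 3 (X * (1 - X ^ 2 : PowerSeries ℚ)⁻¹) = 1 := by
    rw [show (3 : ℕ) = 2 + 1 from rfl, PowerSeries.coeff_succ_X_mul, hI2]
  rw [map_add, map_sub, mul_assoc, coeff_C_mul, coeff_C_mul, coeff_C_mul, hXI, iA3, iB3]
  norm_num
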